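/- Let U be a nonsingular 𝒰-matrix in standard 2×2 block form U = [[U_J, α 𝟏𝟏ᵗ], [b_K 𝟏ᵗ, U_K]] with α μ̄_J < 1, where U_J is a nonsingular matrix with potential vector μ_J = U_J⁻¹𝟏 and ν_K = (U_Kᵗ)⁻¹𝟏 = (1/U_{nn}) e_n. Then for i in the J-block and j in the K-block, (U⁻¹)_{ij} < 0 if and only if α > 0, (μ_J)_i > 0 and j = n. -/

import Mathlib

open Matrix BigOperators

theorem mulVMV {l n p : Type*} [Fintype n] (A : Matrix l n ℝ) (w : n → ℝ) (v : p → ℝ) :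
    A * vecMulVec w v = vecMulVec (A *ᵥ w) v := by
  ext i j
  simp [mul_apply, vecMulVec_apply, mulVec, dotProduct, Finset.sum_mul, mul_assoc]

theorem vMVmul {l n p : Type*} [Fintype n] (w : l → ℝ) (v : n → ℝ) (B : Matrix n p ℝ) :
    vecMulVec w v * B = vecMulVec w (v ᵥ* B) := by
  ext i j
  simp [mul_apply, vecMulVec_apply, vecMul, dotProduct, Finset.mul_sum, mul_assoc,
    mul_comm, mul_left_comm]

theorem vMVvMV {l n p : Type*} [Fintype n] (w : l → ℝ) (v : n → ℝ) (x : n → ℝ) (y : p → ℝ) :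
    vecMulVec w v * vecMulVec x y = (v ⬝ᵥ x) • vecMulVec w y := by
  ext i j
  simp only [mul_apply, vecMulVec_apply, Matrix.smul_apply, smul_eq_mul, dotProduct, Finset.sum_mul]
  exact Finset.sum_congr rfl (fun l _ => by ring)

theorem link_JK_block (m k : ℕ)
    (UJ : Matrix (Fin m) (Fin m) ℝ) (UK : Matrix (Fin (k + 1)) (Fin (k + 1)) ℝ)
    (α : ℝ) (hJ : IsUnit UJ.det) (hK : IsUnit UK.det)
    (eK : Fin (k + 1) → ℝ) (heK : eK = Pi.single (Fin.last k) 1)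
    (μJ : Fin m → ℝ) (hμJ : μJ = UJ⁻¹ *ᵥ (fun _ => 1))
    (hμJnonneg : ∀ i, 0 ≤ μJ i)
    (hα : α * (∑ i, μJ i) < 1)
    (hUnn : 0 < UK (Fin.last k) (Fin.last k))
    (hνK : (UKᵀ)⁻¹ *ᵥ (fun _ => (1:ℝ))
      = (UK (Fin.last k) (Fin.last k))⁻¹ • (Pi.single (Fin.last k) 1 : Fin (k + 1) → ℝ))
    (U : Matrix (Fin m ⊕ Fin (k + 1)) (Fin m ⊕ Fin (k + 1)) ℝ)
    (hU : U = fromBlocks UJ (α • vecMulVec (fun _ => 1) (fun _ => 1))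
      (vecMulVec (UK *ᵥ eK) (fun _ => 1)) UK) :
    ∀ (i : Fin m) (j : Fin (k + 1)),
      U⁻¹ (Sum.inl i) (Sum.inr j) < 0 ↔ 0 < α ∧ 0 < μJ i ∧ j = Fin.last k := by
  intro i j
  have hKT : IsUnit UKᵀ.det := by rwa [det_transpose]
  set σ : ℝ := ∑ i, μJ i with hσ
  have h1c : 0 < 1 - α * σ := by linarith
  set d : ℝ := (1 - α * σ)⁻¹ with hddef
  have hd1 : (1 - α * σ) * d = 1 := mul_inv_cancel₀ (ne_of_gt h1c)
  have hd1' : (1 - α * σ) * (1 - α * σ)⁻¹ = 1 := mul_inv_cancel₀ (ne_of_gt h1c)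
  have hdpos : 0 < d := inv_pos.mpr h1c
  set v : Fin m → ℝ := (UJᵀ)⁻¹ *ᵥ (fun _ => 1) with hvdef
  set z : Fin (k+1) → ℝ := (UKᵀ)⁻¹ *ᵥ (fun _ => 1) with hzdef
  have hw : UJ *ᵥ μJ = fun _ => 1 := by
    rw [hμJ, mulVec_mulVec, mul_nonsing_inv _ hJ, one_mulVec]
  have hv : (fun _ => (1:ℝ)) ᵥ* UJ⁻¹ = v := by
    rw [hvdef, ← transpose_nonsing_inv, mulVec_transpose]
  have hz : (fun _ => (1:ℝ)) ᵥ* UK⁻¹ = z := by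
    rw [hzdef, ← transpose_nonsing_inv, mulVec_transpose]
  have h1e : (fun _ : Fin (k+1) => (1:ℝ)) ⬝ᵥ eK = 1 := by
    simp [heK, dotProduct]
  have h1μ : (fun _ : Fin m => (1:ℝ)) ⬝ᵥ μJ = σ := by
    simp [dotProduct, hσ]
  set V : Matrix (Fin m ⊕ Fin (k + 1)) (Fin m ⊕ Fin (k + 1)) ℝ :=
    fromBlocks (UJ⁻¹ + (α * d) • vecMulVec μJ v) ((-(α * d)) • vecMulVec μJ z)
      ((-d) • vecMulVec eK v) (UK⁻¹ + (α * σ * d) • vecMulVec eK z) with hV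
  have h11 : UJ * (UJ⁻¹ + (α * d) • vecMulVec μJ v)
      + (α • vecMulVec (fun _ : Fin m => (1:ℝ)) (fun _ : Fin (k+1) => (1:ℝ))) * ((-d) • vecMulVec eK v) = 1 := by
    rw [Matrix.mul_add, mul_nonsing_inv _ hJ, Matrix.mul_smul, mulVMV, hw, Matrix.smul_mul,
      Matrix.mul_smul, vMVvMV, h1e, one_smul]
    module
  have h12 : UJ * ((-(α * d)) • vecMulVec μJ z)
      + (α • vecMulVec (fun _ : Fin m => (1:ℝ)) (fun _ : Fin (k+1) => (1:ℝ)))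
        * (UK⁻¹ + (α * σ * d) • vecMulVec eK z)
      = 0 := by
    rw [Matrix.mul_smul, mulVMV, hw, Matrix.smul_mul, Matrix.mul_add, vMVmul, hz,
      Matrix.mul_smul, vMVvMV, h1e, one_smul]
    match_scalars
    all_goals linear_combination (-α) * hd1' 
  have h21 : vecMulVec (UK *ᵥ eK) (fun _ : Fin m => (1:ℝ)) * (UJ⁻¹ + (α * d) • vecMulVec μJ v)
      + UK * ((-d) • vecMulVec eK v) = 0 := by
    rw [Matrix.mul_add, vMVmul, hv, Matrix.mul_smul, vMVvMV, h1μ, Matrix.mul_smul, mulVMV]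
    match_scalars
    all_goals linear_combination -hd1' 
  have h22 : vecMulVec (UK *ᵥ eK) (fun _ : Fin m => (1:ℝ)) * ((-(α * d)) • vecMulVec μJ z)
      + UK * (UK⁻¹ + (α * σ * d) • vecMulVec eK z) = 1 := by
    rw [Matrix.mul_smul, vMVvMV, h1μ, Matrix.mul_add, mul_nonsing_inv _ hK,
      Matrix.mul_smul, mulVMV]
    module
  have hUV : U * V = 1 := by
    rw [hU, hV, fromBlocks_multiply, h11, h12, h21, h22, fromBlocks_one]
  have hinv : U⁻¹ = V := inv_eq_right_inv hUV
  have hentry : U⁻¹ (Sum.inl i) (Sum.inr j) = -(α * d) * (μJ i * z j) := by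
    rw [hinv, hV]
    simp [fromBlocks_apply₁₂, vecMulVec_apply]
  rw [hentry]
  by_cases hj : j = Fin.last k
  · subst hj
    have hzj : z (Fin.last k) = (UK (Fin.last k) (Fin.last k))⁻¹ := by
      rw [hνK]; simp
    rw [hzj]
    have hUinv : 0 < (UK (Fin.last k) (Fin.last k))⁻¹ := inv_pos.mpr hUnn
    have hdc : 0 < d * (UK (Fin.last k) (Fin.last k))⁻¹ := mul_pos hdpos hUinv
    constructor
    · intro h
      have hαμ : 0 < α * μJ i := by
        by_contra h'
        push_neg at h'
        nlinarith [mul_nonneg (neg_nonneg.mpr h') hdc.le]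
      have hμpos : 0 < μJ i := by
        rcases lt_or_eq_of_le (hμJnonneg i) with h' | h'
        · exact h'
        · exfalso; rw [← h'] at hαμ; simp at hαμ
      have hαpos : 0 < α := by
        by_contra h'
        push_neg at h'
        nlinarith
      exact ⟨hαpos, hμpos, rfl⟩
    · rintro ⟨hα0, hμ0, -⟩
      nlinarith [mul_pos (mul_pos hα0 hμ0) hdc]
  · have hzj : z j = 0 := by
      rw [hνK]; simp [Pi.single_apply, hj]
    simp [hzj, hj]
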